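/- arXiv:2406.12061 — 4 statements merged into one kernel-verified Lean document; each statement's English description precedes it below -/
import Mathlib

section
/- Let H be a complex Hilbert space and let A₁, A₂ be bounded linear operators on H. If A₂ is normal and the commutator [A₁, A₂] = A₁A₂ − A₂A₁ commutes with A₂, then [A₁, A₂] = 0. -/
open NormedSpace Bornology

lemma fuglede' {E : Type*} [NormedRing E] [StarRing E] [CStarRing E]
    [NormedAlgebra ℂ E] [StarModule ℂ E] [ContinuousStar E] [CompleteSpace E]
    (N D : E) (hN : star N * N = N * star N) (h : D * N = N * D) :
    D * star N = star N * D := by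
  letI : NormedAlgebra ℚ E := NormedAlgebra.restrictScalars ℚ ℂ E
  set M := star N with hM
  have hMN : Commute M N := hN
  have hDN : Commute D N := h
  set F : ℂ → E := fun z => exp (z • M) * D * exp (z • (-M)) with hF
  have d1 : Differentiable ℂ fun z : ℂ => exp (z • M) :=
    fun z => (hasDerivAt_exp_smul_const M z).differentiableAt
  have d2 : Differentiable ℂ fun z : ℂ => exp (z • (-M)) :=
    fun z => (hasDerivAt_exp_smul_const (-M) z).differentiableAt
  have dF : Differentiable ℂ F := (d1.mul (differentiable_const D)).mul d2
  have hb : ∀ z : ℂ, ‖F z‖ ≤ ‖D‖ := by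
    intro z
    set c : ℂ := starRingEnd ℂ z with hc
    have hcom2 : Commute (exp (-(c • N))) D := (((hDN.symm.smul_left c).neg_left).exp_left)
    have hDrw : D = exp (-(c • N)) * D * exp (c • N) := by
      rw [hcom2.eq, mul_assoc, ← exp_add_of_commute ((Commute.refl (c • N)).neg_left),
        neg_add_cancel, exp_zero, mul_one]
    have c1 : Commute (z • M) (-(c • N)) := ((hMN.smul_left z).smul_right c).neg_right
    have c2 : Commute (c • N) (-(z • M)) := ((hMN.smul_left z).smul_right c).symm.neg_right
    have hkey : F z = exp (z • M - c • N) * D * exp (c • N - z • M) := by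
      rw [hF]
      simp only [sub_eq_add_neg, smul_neg]
      rw [exp_add_of_commute c1, exp_add_of_commute c2]
      conv_lhs => rw [hDrw]
      simp only [mul_assoc]
    have hstarS : star (z • M - c • N) = -(z • M - c • N) := by
      rw [star_sub, star_smul, star_smul, hM, star_star, neg_sub, hc]
      simp [Complex.star_def]
    have hU : exp (z • M - c • N) ∈ unitary E :=
      exp_mem_unitary_of_mem_skewAdjoint (skewAdjoint.mem_iff.mpr hstarS)
    have hstar : exp (c • N - z • M) = star (exp (z • M - c • N)) := by
      rw [star_exp, hstarS, neg_sub]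
    rw [hkey, hstar, mul_assoc]
    rw [CStarRing.norm_mem_unitary_mul (D * star (exp (z • M - c • N))) hU,
      CStarRing.norm_mul_mem_unitary D (Unitary.star_mem hU)]
  have hbdd : IsBounded (Set.range F) :=
    (isBounded_iff_forall_norm_le).2 ⟨‖D‖, by rintro x ⟨z, rfl⟩; exact hb z⟩
  have hF0 : F 0 = D := by simp [hF]
  have hcomm2 : ∀ z : ℂ, exp (z • M) * D = D * exp (z • M) := by
    intro z
    have h1 : F z = D := (dF.apply_eq_apply_of_bounded hbdd z 0).trans hF0
    have h2 : exp (z • (-M)) * exp (z • M) = 1 := by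
      rw [← exp_add_of_commute]
      · rw [smul_neg, neg_add_cancel, exp_zero]
      · simp only [smul_neg]
        exact (Commute.refl (z • M)).neg_left
    calc exp (z • M) * D = exp (z • M) * D * (exp (z • (-M)) * exp (z • M)) := by
          rw [h2, mul_one]
      _ = F z * exp (z • M) := by rw [hF]; simp only [mul_assoc]
      _ = D * exp (z • M) := by rw [h1]
  have hd1 : HasDerivAt (fun z : ℂ => exp (z • M) * D) (exp ((0:ℂ) • M) * M * D) 0 :=
    (hasDerivAt_exp_smul_const M 0).mul_const D
  have hd2 : HasDerivAt (fun z : ℂ => exp (z • M) * D) (D * (exp ((0:ℂ) • M) * M)) 0 := by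
    have h3 := HasDerivAt.const_mul D (hasDerivAt_exp_smul_const M (0 : ℂ))
    exact (funext hcomm2) ▸ h3
  have huniq := hd1.unique hd2
  simp only [zero_smul, exp_zero, one_mul] at huniq
  exact huniq.symm

section KS

variable {E : Type*} [Ring E]

/-- The inner derivation `X ↦ XN - NX`. -/
private def dlt (N : E) (X : E) : E := X * N - N * X

private lemma dlt_add (N X Y : E) : dlt N (X + Y) = dlt N X + dlt N Y := by
  simp only [dlt]; noncomm_ring

private lemma dlt_iter_add (N : E) (n : ℕ) (X Y : E) :
    (dlt N)^[n] (X + Y) = (dlt N)^[n] X + (dlt N)^[n] Y := by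
  induction n generalizing X Y with
  | zero => simp
  | succ n ih =>
    rw [Function.iterate_succ_apply, Function.iterate_succ_apply, Function.iterate_succ_apply,
      dlt_add, ih]

private lemma dlt_iter_central {N P : E} (hc : P * N = N * P) (n : ℕ) (X : E) :
    (dlt N)^[n] (P * X) = P * (dlt N)^[n] X := by
  induction n generalizing X with
  | zero => simp
  | succ n ih =>
    rw [Function.iterate_succ_apply, Function.iterate_succ_apply]
    have h : dlt N (P * X) = P * dlt N X := by
      simp only [dlt]
      rw [mul_sub, mul_assoc, ← mul_assoc N P X, ← hc, mul_assoc]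
    rw [h, ih]

private lemma dlt_leibniz {N P B : E} (hc : P * N = N * P) (hB : dlt N B = P) (n : ℕ) (X : E) :
    (dlt N)^[n + 1] (B * X) = B * (dlt N)^[n + 1] X + (n + 1) • (P * (dlt N)^[n] X) := by
  induction n generalizing X with
  | zero =>
    simp only [zero_add, Function.iterate_one, Function.iterate_zero, id_eq, one_smul]
    have h : dlt N (B * X) = B * dlt N X + dlt N B * X := by simp only [dlt]; noncomm_ring
    rw [h, hB]
  | succ n ih =>
    rw [Function.iterate_succ_apply]
    have h1 : dlt N (B * X) = B * dlt N X + P * X := by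
      rw [← hB]; simp only [dlt]; noncomm_ring
    rw [h1, dlt_iter_add, ih, dlt_iter_central hc, ← Function.iterate_succ_apply,
      ← Function.iterate_succ_apply]
    rw [add_assoc, ← succ_nsmul]

private lemma dlt_pow {N P B : E} (hc : P * N = N * P) (hB : dlt N B = P) (n : ℕ) :
    (dlt N)^[n] (B ^ n) = n.factorial • P ^ n ∧ (dlt N)^[n + 1] (B ^ n) = 0 := by
  induction n with
  | zero =>
    constructor
    · simp
    · simp [dlt]
  | succ n ih =>
    obtain ⟨hA, hZ⟩ := ih
    have hBpow : B ^ (n + 1) = B * B ^ n := by rw [pow_succ']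
    constructor
    · rw [hBpow, dlt_leibniz hc hB, hZ, hA, mul_zero, zero_add, mul_smul_comm,
        ← pow_succ', smul_smul, ← Nat.factorial_succ]
    · rw [hBpow]
      have := dlt_leibniz hc hB (n + 1) (B ^ n)
      rw [this]
      have h2 : (dlt N)^[n + 2] (B ^ n) = 0 := by
        rw [Function.iterate_succ_apply', hZ]
        simp [dlt]
      rw [h2, hZ]
      simp

end KS

private lemma dlt_norm {E : Type*} [NormedRing E] (N : E) (n : ℕ) (X : E) :
    ‖(dlt N)^[n] X‖ ≤ (2 * ‖N‖) ^ n * ‖X‖ := by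
  induction n generalizing X with
  | zero => simp
  | succ n ih =>
    rw [Function.iterate_succ_apply]
    calc ‖(dlt N)^[n] (dlt N X)‖ ≤ (2 * ‖N‖) ^ n * ‖dlt N X‖ := ih _
      _ ≤ (2 * ‖N‖) ^ n * (2 * ‖N‖ * ‖X‖) := by
          refine mul_le_mul_of_nonneg_left ?_ (by positivity)
          calc ‖X * N - N * X‖ ≤ ‖X * N‖ + ‖N * X‖ := norm_sub_le _ _
            _ ≤ ‖X‖ * ‖N‖ + ‖N‖ * ‖X‖ := add_le_add (norm_mul_le _ _) (norm_mul_le _ _)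
            _ = 2 * ‖N‖ * ‖X‖ := by ring
      _ = (2 * ‖N‖) ^ (n + 1) * ‖X‖ := by ring

/-- If `A₂ ∈ B(H)` is normal and the commutator `[A₁, A₂]` commutes
with `A₂`, then `[A₁, A₂] = 0`. -/
theorem commutator_eq_zero_of_normal_of_commutes
    {H : Type*} [NormedAddCommGroup H] [InnerProductSpace ℂ H] [CompleteSpace H]
    (A₁ A₂ : H →L[ℂ] H) (h₂ : IsStarNormal A₂)
    (hcomm : (A₁ * A₂ - A₂ * A₁) * A₂ = A₂ * (A₁ * A₂ - A₂ * A₁)) :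
    A₁ * A₂ - A₂ * A₁ = 0 := by
  set N : H →L[ℂ] H := A₂ with hNdef
  set D : H →L[ℂ] H := A₁ * A₂ - A₂ * A₁ with hDdef
  -- Fuglede: D commutes with star N
  have hfug : D * star N = star N * D := fuglede' N D h₂.star_comm_self.eq hcomm
  have hfug' : star D * N = N * star D := by
    have h1 := congrArg star hfug
    simpa [star_mul] using h1.symm
  set B : H →L[ℂ] H := star D * A₁ with hBdef
  set P : H →L[ℂ] H := star D * D with hPdef
  have hPB : dlt N B = P := by
    calc (star D * A₁) * N - N * (star D * A₁)
        = star D * (A₁ * N) - (N * star D) * A₁ := by rw [mul_assoc, mul_assoc]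
      _ = star D * (A₁ * N) - (star D * N) * A₁ := by rw [hfug']
      _ = star D * (A₁ * N) - star D * (N * A₁) := by rw [mul_assoc]
      _ = star D * (A₁ * N - N * A₁) := by rw [mul_sub]
      _ = star D * D := by rw [hDdef]
  have hPN : P * N = N * P := by
    calc (star D * D) * N = star D * (D * N) := by rw [mul_assoc]
      _ = star D * (N * D) := by rw [hcomm]
      _ = (star D * N) * D := by rw [mul_assoc]
      _ = (N * star D) * D := by rw [hfug']
      _ = N * (star D * D) := by rw [mul_assoc]
  -- P is self-adjoint
  have hPsa : IsSelfAdjoint P := by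
    rw [hPdef]
    exact IsSelfAdjoint.star_mul_self D
  -- the key norm estimate
  set c : ℝ := 2 * ‖N‖ * ‖B‖ with hcdef
  have hc0 : 0 ≤ c := by positivity
  have hkey : ∀ m : ℕ, 0 < m → (m.factorial : ℝ) * ‖P ^ m‖ ≤ c ^ m := by
    intro m hm
    have h1 : ((m.factorial : ℂ)) • P ^ m = (dlt N)^[m] (B ^ m) := by
      rw [Nat.cast_smul_eq_nsmul]
      exact ((dlt_pow hPN hPB m).1).symm
    have h2 : ‖((m.factorial : ℂ)) • P ^ m‖ = (m.factorial : ℝ) * ‖P ^ m‖ := by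
      rw [norm_smul, Complex.norm_natCast]
    calc (m.factorial : ℝ) * ‖P ^ m‖ = ‖(dlt N)^[m] (B ^ m)‖ := by rw [← h2, h1]
      _ ≤ (2 * ‖N‖) ^ m * ‖B ^ m‖ := dlt_norm N m _
      _ ≤ (2 * ‖N‖) ^ m * ‖B‖ ^ m := by
          exact mul_le_mul_of_nonneg_left (norm_pow_le' B hm) (by positivity)
      _ = c ^ m := by simp [hcdef, mul_pow]
  -- conclude P = 0
  have hP0 : P = 0 := by
    by_contra hP
    have hPpos : 0 < ‖P‖ := norm_pos_iff.mpr hP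
    set r : ℝ := c / ‖P‖ with hrdef
    have hlt : ∀ᶠ n in Filter.atTop, r ^ n / (n.factorial : ℝ) < 1 :=
      (FloorSemiring.tendsto_pow_div_factorial_atTop r).eventually_lt_const one_pos
    obtain ⟨K, hK⟩ := Filter.eventually_atTop.mp hlt
    set m : ℕ := 2 ^ K with hmdef
    have hmK : K ≤ m := Nat.lt_two_pow_self.le
    have hnorm : ‖P ^ m‖ = ‖P‖ ^ m := by
      have h5 := hPsa.nnnorm_pow_two_pow K
      rw [hmdef, ← coe_nnnorm, h5, NNReal.coe_pow, coe_nnnorm]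
    have h3 : (m.factorial : ℝ) * ‖P‖ ^ m ≤ c ^ m := by
      rw [← hnorm]; exact hkey m (by positivity)
    have h4 : (1 : ℝ) ≤ r ^ m / (m.factorial : ℝ) := by
      rw [hrdef, div_pow, one_le_div (by exact_mod_cast m.factorial_pos)]
      rw [le_div_iff₀ (pow_pos hPpos m)]
      linarith [h3]
    exact absurd h4 (not_le.mpr (hK m hmK))
  -- conclude D = 0
  exact (CStarRing.star_mul_self_eq_zero_iff D).mp hP0
end

section
/- Let H be a complex Hilbert space and let A₁, A₂ : ℂ² → B(H) be holomorphic with A₁(z), A₂(z) normal for every z, satisfying i(∂₂A₁(z) − ∂₁A₂(z)) = [A₁(z) − i·A₁(z)*, A₂(z)] for all z ∈ ℂ². Then: (i) [A₁(z) − A₁(w), A₂(w)] = 0 and [A₁(z)* − A₁(w)*, A₂(w)] = 0 for all z, w ∈ ℂ²; (ii) for all z₁, w₁, z₂ ∈ ℂ and all u ∈ ℂ², the operator A₂(z₁, z₂) − A₂(w₁, z₂) commutes with A₁(u) and with A₂(u). -/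
/-- The complex partial derivative `∂₁` of a function on `ℂ²`. -/
noncomputable def pderiv1 {E : Type*} [NormedAddCommGroup E] [NormedSpace ℂ E]
    (f : ℂ × ℂ → E) (z : ℂ × ℂ) : E :=
  fderiv ℂ f z (1, 0)

/-- The complex partial derivative `∂₂` of a function on `ℂ²`. -/
noncomputable def pderiv2 {E : Type*} [NormedAddCommGroup E] [NormedSpace ℂ E]
    (f : ℂ × ℂ → E) (z : ℂ × ℂ) : E :=
  fderiv ℂ f z (0, 1)

namespace MinkSD

open Complex Filter Topology

noncomputable section

/-! ### The coordinatewise conjugation on `ℂ²`. -/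

/-- Coordinatewise complex conjugation on `ℂ × ℂ`. -/
def cc (z : ℂ × ℂ) : ℂ × ℂ := ((starRingEnd ℂ) z.1, (starRingEnd ℂ) z.2)

@[simp] lemma cc_cc (z : ℂ × ℂ) : cc (cc z) = z := by simp [cc]

lemma cc_add (a b : ℂ × ℂ) : cc (a + b) = cc a + cc b := by
  simp [cc, Prod.ext_iff]

lemma cc_smul (c : ℂ) (a : ℂ × ℂ) : cc (c • a) = (starRingEnd ℂ) c • cc a := by
  simp [cc, Prod.ext_iff, Prod.smul_fst, Prod.smul_snd, smul_eq_mul, map_mul]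

/-- `cc` as a continuous `ℝ`-linear map. -/
def ccL : (ℂ × ℂ) →L[ℝ] (ℂ × ℂ) :=
  ((Complex.conjCLE : ℂ ≃L[ℝ] ℂ).prodCongr (Complex.conjCLE : ℂ ≃L[ℝ] ℂ)).toContinuousLinearMap

lemma ccL_apply (z : ℂ × ℂ) : ccL z = cc z := rfl

/-! ### One- and several-variable identity theorems -/

section Identity

variable {E : Type*} [NormedAddCommGroup E] [NormedSpace ℂ E] [CompleteSpace E]

lemma entire_zero_of_real_zero {f : ℂ → E} (hf : Differentiable ℂ f)
    (h : ∀ x : ℝ, f x = 0) (z : ℂ) : f z = 0 := by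
  have hA : AnalyticOnNhd ℂ f Set.univ :=
    hf.differentiableOn.analyticOnNhd isOpen_univ
  refine hA.eqOn_zero_of_preconnected_of_frequently_eq_zero isPreconnected_univ
    (Set.mem_univ (0 : ℂ)) ?_ (Set.mem_univ z)
  have ht : Tendsto (fun n : ℕ => ((((n : ℝ) + 1)⁻¹ : ℝ) : ℂ)) atTop (𝓝[≠] (0 : ℂ)) := by
    apply tendsto_nhdsWithin_of_tendsto_nhds_of_eventually_within
    · have h0 : Tendsto (fun n : ℕ => ((n : ℝ) + 1)⁻¹) atTop (𝓝 (0 : ℝ)) := by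
        simpa [one_div] using tendsto_one_div_add_atTop_nhds_zero_nat (𝕜 := ℝ)
      have h1 := (Complex.continuous_ofReal.tendsto (0 : ℝ)).comp h0
      simpa [Function.comp_def] using h1
    · refine Eventually.of_forall fun n => ?_
      simp only [Set.mem_compl_iff, Set.mem_singleton_iff]
      have : ((n : ℝ) + 1)⁻¹ ≠ 0 := by positivity
      exact_mod_cast Complex.ofReal_ne_zero.mpr this
  exact ht.frequently (Filter.Frequently.of_forall fun n => h _)

lemma entire2_zero_of_conj_diag {g : ℂ × ℂ → E} (hg : Differentiable ℂ g)
    (h : ∀ z : ℂ, g (z, (starRingEnd ℂ) z) = 0) (p : ℂ × ℂ) : g p = 0 := by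
  have key : ∀ u v : ℂ, g (u + Complex.I * v, u - Complex.I * v) = 0 := by
    have step1 : ∀ (v : ℝ) (u : ℂ),
        g (u + Complex.I * v, u - Complex.I * v) = 0 := by
      intro v
      refine entire_zero_of_real_zero
        (f := fun u : ℂ => g (u + Complex.I * v, u - Complex.I * v)) ?_ ?_
      · exact hg.comp ((differentiable_id.add_const _).prodMk (differentiable_id.sub_const _))
      · intro x
        have hx : ((x : ℂ) - Complex.I * v) = (starRingEnd ℂ) ((x : ℂ) + Complex.I * v) := by
          simp [map_add, map_mul, Complex.conj_ofReal, Complex.conj_I]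
          ring
        show g ((x : ℂ) + Complex.I * v, (x : ℂ) - Complex.I * v) = 0
        rw [hx]
        exact h _
    intro u v
    refine entire_zero_of_real_zero
      (f := fun v : ℂ => g (u + Complex.I * v, u - Complex.I * v)) ?_ (fun x => step1 x u) v
    · exact hg.comp (((differentiable_id.const_mul _).const_add _).prodMk
        ((differentiable_id.const_mul _).const_sub _))
  obtain ⟨a, b⟩ := p
  have hz : (a, b) = ((a + b) / 2 + Complex.I * ((a - b) / (2 * Complex.I)),
      (a + b) / 2 - Complex.I * ((a - b) / (2 * Complex.I))) := by
    have hI := Complex.I_ne_zero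
    rw [Prod.mk.injEq]
    constructor
    · field_simp
      ring
    · field_simp
      ring
  rw [hz]
  exact key _ _

lemma entire4_zero_of_conj_diag {g : (ℂ × ℂ) × (ℂ × ℂ) → E}
    (hg : Differentiable ℂ g) (h : ∀ z : ℂ × ℂ, g (z, cc z) = 0)
    (p : (ℂ × ℂ) × (ℂ × ℂ)) : g p = 0 := by
  obtain ⟨⟨a, z₂⟩, ⟨b, w₂⟩⟩ := p
  have step1 : ∀ (z₂ a b : ℂ), g ((a, z₂), (b, (starRingEnd ℂ) z₂)) = 0 := by
    intro z₂ a b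
    refine entire2_zero_of_conj_diag
      (g := fun q : ℂ × ℂ => g ((q.1, z₂), (q.2, (starRingEnd ℂ) z₂))) ?_ ?_ (a, b)
    · exact hg.comp ((differentiable_fst.prodMk (differentiable_const _)).prodMk
        (differentiable_snd.prodMk (differentiable_const _)))
    · intro z
      exact h (z, z₂)
  refine entire2_zero_of_conj_diag
    (g := fun q : ℂ × ℂ => g ((a, q.1), (b, q.2))) ?_ ?_ (z₂, w₂)
  · exact hg.comp (((differentiable_const _).prodMk differentiable_fst).prodMk
      ((differentiable_const _).prodMk differentiable_snd))
  · intro z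
    exact step1 z a b

end Identity

/-! ### Commutation and derivatives -/

section CommuteFDeriv

variable {𝔸 : Type*} [NormedRing 𝔸] [NormedAlgebra ℂ 𝔸]

lemma isClosed_commute (b : 𝔸) : IsClosed {x : 𝔸 | Commute x b} := by
  have : {x : 𝔸 | Commute x b} = (fun x : 𝔸 => x * b - b * x) ⁻¹' {0} := by
    ext x
    simp only [Set.mem_setOf_eq, Set.mem_preimage, Set.mem_singleton_iff, sub_eq_zero]
    exact commute_iff_eq x b
  rw [this]
  exact IsClosed.preimage ((continuous_id.mul continuous_const).sub
    (continuous_const.mul continuous_id)) isClosed_singleton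

lemma norm_natCast_tendsto : Tendsto (fun n : ℕ => ‖(n : ℂ)‖) atTop atTop := by
  have : (fun n : ℕ => ‖(n : ℂ)‖) = fun n : ℕ => (n : ℝ) := by
    funext n
    simp
  rw [this]
  exact tendsto_natCast_atTop_atTop

lemma commute_fderiv {f : ℂ × ℂ → 𝔸} (hf : Differentiable ℂ f) {b : 𝔸}
    (h : ∀ u, Commute (f u) b) (z v : ℂ × ℂ) : Commute (fderiv ℂ f z v) b := by
  have hl := (hf z).hasFDerivAt.lim v norm_natCast_tendsto
  exact (isClosed_commute b).mem_of_tendsto hl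
    (Eventually.of_forall fun n => Commute.smul_left ((h _).sub_left (h _)) _)

lemma commute_star_fderiv [StarRing 𝔸] [NormedStarGroup 𝔸] [StarModule ℂ 𝔸]
    {f : ℂ × ℂ → 𝔸} (hf : Differentiable ℂ f) {b : 𝔸}
    (h : ∀ u, Commute (star (f u)) b) (z v : ℂ × ℂ) :
    Commute (star (fderiv ℂ f z v)) b := by
  have hl := (hf z).hasFDerivAt.lim v norm_natCast_tendsto
  have hl' := (continuous_star.tendsto (fderiv ℂ f z v)).comp hl
  refine (isClosed_commute b).mem_of_tendsto hl' (Eventually.of_forall fun n => ?_)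
  show Commute (star ((n : ℂ) • (f (z + ((n : ℂ))⁻¹ • v) - f z))) b
  rw [star_smul, star_sub]
  exact Commute.smul_left ((h _).sub_left (h _)) _

end CommuteFDeriv

/-! ### Holomorphy of `z ↦ (f (conj z))⋆` -/

section Dagger

variable {𝔸 : Type*} [NormedRing 𝔸] [NormedAlgebra ℂ 𝔸] [StarRing 𝔸]
  [NormedStarGroup 𝔸] [StarModule ℂ 𝔸]

/-- The conjugate-linear candidate derivative, as a `ℂ`-linear map. -/
def daggerDeriv (T : (ℂ × ℂ) →L[ℂ] 𝔸) : (ℂ × ℂ) →L[ℂ] 𝔸 :=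
  { toFun := fun v => star (T (cc v))
    map_add' := by
      intro a b
      show star (T (cc (a + b))) = star (T (cc a)) + star (T (cc b))
      rw [cc_add, map_add, star_add]
    map_smul' := by
      intro c v
      show star (T (cc (c • v))) = (RingHom.id ℂ) c • star (T (cc v))
      rw [cc_smul, map_smul, star_smul, RingHom.id_apply]
      simp
    cont := by
      refine continuous_star.comp (T.continuous.comp ?_)
      rw [show cc = ⇑ccL from rfl]
      exact ccL.continuous }

lemma daggerDeriv_apply (T : (ℂ × ℂ) →L[ℂ] 𝔸) (v : ℂ × ℂ) :
    daggerDeriv T v = star (T (cc v)) := rfl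

lemma differentiable_dagger {f : ℂ × ℂ → 𝔸} (hf : Differentiable ℂ f) :
    Differentiable ℂ (fun z => star (f (cc z))) := by
  intro z
  have h1 : HasFDerivAt cc (ccL : (ℂ × ℂ) →L[ℝ] (ℂ × ℂ)) z := by
    rw [show cc = ⇑ccL from rfl]
    exact ccL.hasFDerivAt
  have h2 : HasFDerivAt f ((fderiv ℂ f (cc z)).restrictScalars ℝ) (cc z) :=
    ((hf (cc z)).hasFDerivAt).restrictScalars ℝ
  have h3 : HasFDerivAt (star : 𝔸 → 𝔸)
      (((starL' ℝ : 𝔸 ≃L[ℝ] 𝔸) : 𝔸 →L[ℝ] 𝔸)) (f (cc z)) :=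
    ((starL' ℝ : 𝔸 ≃L[ℝ] 𝔸) : 𝔸 →L[ℝ] 𝔸).hasFDerivAt
  have hR : HasFDerivAt (fun z => star (f (cc z)))
      ((((starL' ℝ : 𝔸 ≃L[ℝ] 𝔸) : 𝔸 →L[ℝ] 𝔸).comp
        ((fderiv ℂ f (cc z)).restrictScalars ℝ)).comp ccL) z :=
    (h3.comp (cc z) h2).comp z h1
  rw [differentiableAt_iff_restrictScalars ℝ hR.differentiableAt]
  refine ⟨daggerDeriv (fderiv ℂ f (cc z)), ?_⟩
  rw [hR.fderiv]
  refine ContinuousLinearMap.ext fun v => ?_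
  rfl

end Dagger

/-! ### Fuglede's theorem -/

section Fuglede

open NormedSpace

variable {𝔸 : Type*} [NormedRing 𝔸] [StarRing 𝔸] [CStarRing 𝔸] [NormedAlgebra ℂ 𝔸]
  [CompleteSpace 𝔸] [StarModule ℂ 𝔸] [NormOneClass 𝔸]

theorem fuglede {N T : 𝔸} (hN : IsStarNormal N) (h : Commute T N) :
    Commute T (star N) := by
  let _ : NormedAlgebra ℚ 𝔸 := .restrictScalars ℚ ℂ 𝔸
  have hexp_cancel : ∀ x : 𝔸, NormedSpace.exp x * NormedSpace.exp (-x) = 1 := by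
    intro x
    rw [← NormedSpace.exp_add_of_commute (Commute.neg_right (Commute.refl x)), add_neg_cancel, NormedSpace.exp_zero]
  have hexp_cancel' : ∀ x : 𝔸, NormedSpace.exp (-x) * NormedSpace.exp x = 1 := by
    intro x
    rw [← NormedSpace.exp_add_of_commute (Commute.neg_left (Commute.refl x)), neg_add_cancel, NormedSpace.exp_zero]
  set f : ℂ → 𝔸 := fun l => NormedSpace.exp (l • star N) * T * NormedSpace.exp (-(l • star N)) with hf
  have hdiff : Differentiable ℂ f := by
    have d1 : Differentiable ℂ fun l : ℂ => NormedSpace.exp (l • star N) :=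
      fun t => (hasDerivAt_exp_smul_const (𝕂 := ℂ) (star N) t).differentiableAt
    have d2 : Differentiable ℂ fun l : ℂ => NormedSpace.exp (-(l • star N)) := by
      have heq : (fun l : ℂ => NormedSpace.exp (-(l • star N))) = fun l : ℂ => NormedSpace.exp (l • (-star N)) := by
        funext l
        rw [smul_neg]
      rw [heq]
      exact fun t => (hasDerivAt_exp_smul_const (𝕂 := ℂ) (-star N) t).differentiableAt
    exact (d1.mul_const T).mul d2
  have hbdd : ∀ l : ℂ, ‖f l‖ ≤ ‖T‖ := by
    intro l
    set S := l • star N - (starRingEnd ℂ) l • N with hS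
    have hsN : Commute (l • star N) ((starRingEnd ℂ) l • N) :=
      (hN.star_comm_self.smul_left l).smul_right _
    have hcomm1 : Commute S ((starRingEnd ℂ) l • N) := hsN.sub_left (Commute.refl _)
    have e1 : NormedSpace.exp (l • star N) = NormedSpace.exp S * NormedSpace.exp ((starRingEnd ℂ) l • N) := by
      rw [← NormedSpace.exp_add_of_commute hcomm1, hS, sub_add_cancel]
    have e2 : NormedSpace.exp (-(l • star N)) = NormedSpace.exp (-((starRingEnd ℂ) l • N)) * NormedSpace.exp (-S) := by
      rw [← NormedSpace.exp_add_of_commute hcomm1.symm.neg_left.neg_right]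
      congr 1
      rw [hS]
      abel
    have hTcomm : Commute T (NormedSpace.exp ((starRingEnd ℂ) l • N)) := (h.smul_right _).exp_right
    have hmid : NormedSpace.exp ((starRingEnd ℂ) l • N) * T * NormedSpace.exp (-((starRingEnd ℂ) l • N)) = T := by
      rw [← hTcomm.eq, mul_assoc, hexp_cancel, mul_one]
    have hfrw : f l = NormedSpace.exp S * T * NormedSpace.exp (-S) := by
      have hstep : f l = NormedSpace.exp S * (NormedSpace.exp ((starRingEnd ℂ) l • N) * T
          * NormedSpace.exp (-((starRingEnd ℂ) l • N))) * NormedSpace.exp (-S) := by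
        show NormedSpace.exp (l • star N) * T * NormedSpace.exp (-(l • star N)) = _
        rw [e1, e2]
        simp only [mul_assoc]
      rw [hstep, hmid]
    have hstarS : star S = -S := by
      rw [hS, star_sub, star_smul, star_smul, star_star]
      simp only [RCLike.star_def, Complex.conj_conj]
      rw [neg_sub]
    have h1 : star (NormedSpace.exp S) = NormedSpace.exp (-S) := by rw [NormedSpace.star_exp, hstarS]
    have hUnorm : ‖NormedSpace.exp S‖ = 1 := by
      have hc := CStarRing.norm_star_mul_self (x := NormedSpace.exp S)
      rw [h1, hexp_cancel' S, norm_one] at hc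
      nlinarith [norm_nonneg (NormedSpace.exp S)]
    have hUnorm' : ‖NormedSpace.exp (-S)‖ = 1 := by
      rw [← h1, norm_star, hUnorm]
    calc ‖f l‖ = ‖NormedSpace.exp S * T * NormedSpace.exp (-S)‖ := by rw [hfrw]
      _ ≤ ‖NormedSpace.exp S * T‖ * ‖NormedSpace.exp (-S)‖ := norm_mul_le _ _
      _ ≤ ‖NormedSpace.exp S‖ * ‖T‖ * ‖NormedSpace.exp (-S)‖ :=
          mul_le_mul_of_nonneg_right (norm_mul_le _ _) (norm_nonneg _)
      _ = ‖T‖ := by rw [hUnorm, hUnorm', one_mul, mul_one]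
  obtain ⟨c, hc⟩ := hdiff.exists_const_forall_eq_of_bounded
    (isBounded_iff_forall_norm_le.2 ⟨‖T‖, by rintro x ⟨l, rfl⟩; exact hbdd l⟩)
  have hfT : ∀ l, f l = T := by
    intro l
    rw [hc l, ← hc 0]
    simp [hf, NormedSpace.exp_zero]
  have hcommExp : ∀ l : ℂ, NormedSpace.exp (l • star N) * T = T * NormedSpace.exp (l • star N) := by
    intro l
    have h1 := congrArg (fun x => x * NormedSpace.exp (l • star N)) (hfT l)
    rwa [mul_assoc (NormedSpace.exp (l • star N) * T), hexp_cancel' _, mul_one] at h1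
  have hd1 : HasDerivAt (fun l : ℂ => NormedSpace.exp (l • star N) * T) (star N * T) 0 := by
    have h1 := (hasDerivAt_exp_smul_const (𝕂 := ℂ) (star N) 0).mul_const T
    simpa using h1
  have hd2 : HasDerivAt (fun l : ℂ => NormedSpace.exp (l • star N) * T) (T * star N) 0 := by
    have h2 := (hasDerivAt_exp_smul_const (𝕂 := ℂ) (star N) 0).const_mul T
    have heqf : (fun l : ℂ => T * NormedSpace.exp (l • star N)) = fun l : ℂ => NormedSpace.exp (l • star N) * T := by
      funext l
      rw [hcommExp l]
    rw [heqf] at h2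
    simpa using h2
  exact (hd1.unique hd2).symm

end Fuglede

/-! ### The Kleinecke–Shirokov theorem -/

section KS

variable {𝔸 : Type*} [NormedRing 𝔸] [StarRing 𝔸] [CStarRing 𝔸] [NormedAlgebra ℂ 𝔸]
  [NormOneClass 𝔸]

/-- The inner derivation `x ↦ N * x - x * N`. -/
def DD (N : 𝔸) : Module.End ℂ 𝔸 :=
  LinearMap.mulLeft ℂ N - LinearMap.mulRight ℂ N

lemma DD_apply (N x : 𝔸) : DD N x = N * x - x * N := rfl

lemma DD_mul (N x y : 𝔸) : DD N (x * y) = DD N x * y + x * DD N y := by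
  simp only [DD_apply]
  noncomm_ring

lemma DD_pow_succ (N : 𝔸) (n : ℕ) (x : 𝔸) :
    (DD N ^ (n + 1)) x = (DD N ^ n) (DD N x) := by
  rw [pow_succ]
  rfl

lemma DD_pow_succ' (N : 𝔸) (n : ℕ) (x : 𝔸) :
    (DD N ^ (n + 1)) x = DD N ((DD N ^ n) x) := by
  rw [pow_succ']
  rfl

lemma DD_norm_le (N x : 𝔸) : ‖DD N x‖ ≤ 2 * ‖N‖ * ‖x‖ := by
  rw [DD_apply]
  calc ‖N * x - x * N‖ ≤ ‖N * x‖ + ‖x * N‖ := norm_sub_le _ _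
    _ ≤ ‖N‖ * ‖x‖ + ‖x‖ * ‖N‖ := add_le_add (norm_mul_le _ _) (norm_mul_le _ _)
    _ = 2 * ‖N‖ * ‖x‖ := by ring

lemma DD_pow_norm_le (N : 𝔸) (n : ℕ) (x : 𝔸) :
    ‖(DD N ^ n) x‖ ≤ (2 * ‖N‖) ^ n * ‖x‖ := by
  induction n with
  | zero => simp
  | succ n ih =>
    rw [DD_pow_succ']
    calc ‖DD N ((DD N ^ n) x)‖ ≤ 2 * ‖N‖ * ‖(DD N ^ n) x‖ := DD_norm_le _ _
      _ ≤ 2 * ‖N‖ * ((2 * ‖N‖) ^ n * ‖x‖) := by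
          have h2 : (0 : ℝ) ≤ 2 * ‖N‖ := by positivity
          exact mul_le_mul_of_nonneg_left ih h2
      _ = (2 * ‖N‖) ^ (n + 1) * ‖x‖ := by ring

lemma DD_pow_mul_left {N b : 𝔸} (hb : DD N b = 0) (n : ℕ) (x : 𝔸) :
    (DD N ^ n) (b * x) = b * (DD N ^ n) x := by
  induction n generalizing x with
  | zero => simp
  | succ n ih =>
    rw [DD_pow_succ, DD_pow_succ]
    rw [DD_mul, hb, zero_mul, zero_add, ih]

lemma DD_pow_P_mul {N P : 𝔸} (hb : DD N (DD N P) = 0) (m : ℕ) (y : 𝔸) :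
    (DD N ^ (m + 1)) (P * y)
      = P * (DD N ^ (m + 1)) y + (m + 1) • (DD N P * (DD N ^ m) y) := by
  induction m generalizing y with
  | zero =>
    simp only [zero_add, pow_one, pow_zero, Module.End.one_apply, one_smul]
    rw [DD_mul]
    abel
  | succ m ih =>
    rw [DD_pow_succ N (m + 1), DD_mul, map_add, DD_pow_mul_left hb, ih (DD N y),
      ← DD_pow_succ N (m + 1) y, ← DD_pow_succ N m y]
    rw [succ_nsmul ((DD N) P * (DD N ^ (m + 1)) y) (m + 1)]
    abel

lemma DD_pow_pow_zero {N P : 𝔸} (hb : DD N (DD N P) = 0) :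
    ∀ n m : ℕ, n < m → (DD N ^ m) (P ^ n) = 0 := by
  intro n
  induction n with
  | zero =>
    intro m hm
    obtain ⟨k, rfl⟩ : ∃ k, m = k + 1 := ⟨m - 1, by omega⟩
    rw [pow_zero, DD_pow_succ]
    have h1 : DD N (1 : 𝔸) = 0 := by simp [DD_apply]
    rw [h1, map_zero]
  | succ n ih =>
    intro m hm
    obtain ⟨k, rfl⟩ : ∃ k, m = k + 1 := ⟨m - 1, by omega⟩
    rw [pow_succ' P n]
    rw [DD_pow_P_mul hb, ih (k + 1) (by omega), ih k (by omega)]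
    simp

lemma DD_pow_pow {N P : 𝔸} (hb : DD N (DD N P) = 0) (n : ℕ) :
    (DD N ^ n) (P ^ n) = n.factorial • (DD N P) ^ n := by
  induction n with
  | zero => simp
  | succ n ih =>
    rw [pow_succ' P n, DD_pow_P_mul hb,
      DD_pow_pow_zero hb n (n + 1) (Nat.lt_succ_self n), mul_zero, zero_add, ih,
      mul_smul_comm, smul_smul, ← pow_succ' (DD N P) n, Nat.factorial_succ]

lemma isStarNormal_pow {b : 𝔸} (hb : IsStarNormal b) (n : ℕ) : IsStarNormal (b ^ n) :=
  ⟨by rw [star_pow]; exact hb.star_comm_self.pow_pow n n⟩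

lemma norm_sq_of_normal {b : 𝔸} (hb : IsStarNormal b) : ‖b ^ 2‖ = ‖b‖ ^ 2 := by
  have h2 : star (b ^ 2) * b ^ 2 = (star b * b) ^ 2 := by
    rw [star_pow]
    exact (hb.star_comm_self.mul_pow 2).symm
  have hsa : IsSelfAdjoint (star b * b) := IsSelfAdjoint.star_mul_self b
  have h3 : ‖(star b * b) ^ 2‖ = ‖star b * b‖ ^ 2 := by
    calc ‖(star b * b) ^ 2‖ = ‖star (star b * b) * (star b * b)‖ := by
          rw [hsa.star_eq, sq]
      _ = ‖star b * b‖ * ‖star b * b‖ := CStarRing.norm_star_mul_self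
      _ = ‖star b * b‖ ^ 2 := (sq _).symm
  have h4 : ‖star b * b‖ = ‖b‖ ^ 2 := by rw [CStarRing.norm_star_mul_self, sq]
  have h1 : ‖b ^ 2‖ ^ 2 = (‖b‖ ^ 2) ^ 2 := by
    calc ‖b ^ 2‖ ^ 2 = ‖star (b ^ 2) * b ^ 2‖ := by
          rw [CStarRing.norm_star_mul_self, sq]
      _ = ‖(star b * b) ^ 2‖ := by rw [h2]
      _ = (‖b‖ ^ 2) ^ 2 := by rw [h3, h4]
  nlinarith [norm_nonneg (b ^ 2), norm_nonneg b, sq_nonneg (‖b ^ 2‖ - ‖b‖ ^ 2),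
    sq_nonneg (‖b ^ 2‖ + ‖b‖ ^ 2)]

lemma norm_two_pow_of_normal {b : 𝔸} (hb : IsStarNormal b) (m : ℕ) :
    ‖b ^ 2 ^ m‖ = ‖b‖ ^ 2 ^ m := by
  induction m with
  | zero => simp
  | succ m ih =>
    have hp : b ^ 2 ^ (m + 1) = (b ^ 2 ^ m) ^ 2 := by
      rw [← pow_mul, pow_succ]
    rw [hp, norm_sq_of_normal (isStarNormal_pow hb _), ih, ← pow_mul, ← pow_succ]

lemma norm_pow_le'' (P : 𝔸) (n : ℕ) : ‖P ^ n‖ ≤ ‖P‖ ^ n := by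
  induction n with
  | zero => simp
  | succ n ih =>
    rw [pow_succ, pow_succ]
    calc ‖P ^ n * P‖ ≤ ‖P ^ n‖ * ‖P‖ := norm_mul_le _ _
      _ ≤ ‖P‖ ^ n * ‖P‖ := mul_le_mul_of_nonneg_right ih (norm_nonneg _)

theorem kleinecke_shirokov {N P : 𝔸} (hnormal : IsStarNormal (N * P - P * N))
    (hc : Commute (N * P - P * N) N) : N * P - P * N = 0 := by
  set b := N * P - P * N with hbdef
  have hDb : DD N P = b := rfl
  have hb2 : DD N (DD N P) = 0 := by
    rw [hDb, DD_apply]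
    exact sub_eq_zero.mpr hc.symm
  have hpow : ∀ n : ℕ, ‖b ^ n‖ * n.factorial ≤ (2 * ‖N‖ * ‖P‖) ^ n := by
    intro n
    have h1 : (n.factorial : ℕ) • b ^ n = (DD N ^ n) (P ^ n) := by
      rw [DD_pow_pow hb2 n, hDb]
    have h4 : ‖(n.factorial : ℕ) • b ^ n‖ = (n.factorial : ℝ) * ‖b ^ n‖ := by
      rw [← Nat.cast_smul_eq_nsmul ℝ, norm_smul]
      simp
    calc ‖b ^ n‖ * n.factorial = ‖(n.factorial : ℕ) • b ^ n‖ := by rw [h4]; ring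
      _ = ‖(DD N ^ n) (P ^ n)‖ := by rw [h1]
      _ ≤ (2 * ‖N‖) ^ n * ‖P ^ n‖ := DD_pow_norm_le N n _
      _ ≤ (2 * ‖N‖) ^ n * ‖P‖ ^ n := by
          have := norm_pow_le'' P n
          have h2 : (0 : ℝ) ≤ (2 * ‖N‖) ^ n := by positivity
          exact mul_le_mul_of_nonneg_left this h2
      _ = (2 * ‖N‖ * ‖P‖) ^ n := by ring
  by_contra hne
  have hb0 : 0 < ‖b‖ := norm_pos_iff.mpr hne
  set C := 2 * ‖N‖ * ‖P‖ with hC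
  have hx : ∀ m : ℕ, (1 : ℝ) ≤ (C / ‖b‖) ^ (2 ^ m) / (((2 ^ m).factorial : ℕ) : ℝ) := by
    intro m
    have h := hpow (2 ^ m)
    rw [norm_two_pow_of_normal hnormal m] at h
    have hfac : (0 : ℝ) < (((2 ^ m).factorial : ℕ) : ℝ) := by
      exact_mod_cast (2 ^ m).factorial_pos
    rw [one_le_div hfac, div_pow, le_div_iff₀ (pow_pos hb0 _)]
    calc (((2 ^ m).factorial : ℕ) : ℝ) * ‖b‖ ^ 2 ^ m
        = ‖b‖ ^ 2 ^ m * ((2 ^ m).factorial : ℕ) := by ring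
      _ ≤ C ^ 2 ^ m := h
  have htend := FloorSemiring.tendsto_pow_div_factorial_atTop (K := ℝ) (C / ‖b‖)
  have hev : ∀ᶠ n : ℕ in atTop, (C / ‖b‖) ^ n / (n.factorial : ℝ) < 1 :=
    htend.eventually_lt_const one_pos
  obtain ⟨n₀, hn₀⟩ := eventually_atTop.mp hev
  exact absurd (hx n₀) (not_le.mpr (hn₀ (2 ^ n₀) n₀.lt_two_pow_self.le))

end KS

/-! ### An algebraic helper -/

lemma sub_comm_aux {𝔸 : Type*} [Ring 𝔸] {X a b s s' : 𝔸}
    (h1 : X = (a - s) * b - b * (a - s)) (h2 : X = (a - s') * b - b * (a - s')) :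
    (s - s') * b = b * (s - s') := by
  have h3 : (s - s') * b - b * (s - s')
      = ((a - s') * b - b * (a - s')) - ((a - s) * b - b * (a - s)) := by
    noncomm_ring
  rw [← h1, ← h2, sub_self] at h3
  exact sub_eq_zero.mp h3

end

end MinkSD

/-- In the Minkowski SD situation:
(i) `[A₁(z) − A₁(w), A₂(w)] = 0` and `[A₁(z)* − A₁(w)*, A₂(w)] = 0` for all `z, w`;
(ii) `A₂(z₁, z₂) − A₂(w₁, z₂)` commutes with `A₁(u)` and `A₂(u)`. -/
theorem minkowski_sd_differences_commute
    {H : Type*} [NormedAddCommGroup H] [InnerProductSpace ℂ H] [CompleteSpace H]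
    (A₁ A₂ : ℂ × ℂ → (H →L[ℂ] H))
    (h₁ : AnalyticOnNhd ℂ A₁ Set.univ) (h₂ : AnalyticOnNhd ℂ A₂ Set.univ)
    (hn₁ : ∀ z, IsStarNormal (A₁ z)) (hn₂ : ∀ z, IsStarNormal (A₂ z))
    (heq : ∀ z, Complex.I • (pderiv2 A₁ z - pderiv1 A₂ z) =
      (A₁ z - Complex.I • star (A₁ z)) * A₂ z -
        A₂ z * (A₁ z - Complex.I • star (A₁ z))) :
    (∀ z w : ℂ × ℂ,
      Commute (A₁ z - A₁ w) (A₂ w) ∧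
      Commute (star (A₁ z) - star (A₁ w)) (A₂ w)) ∧
    (∀ (z₁ w₁ z₂ : ℂ) (u : ℂ × ℂ),
      Commute (A₂ (z₁, z₂) - A₂ (w₁, z₂)) (A₁ u) ∧
      Commute (A₂ (z₁, z₂) - A₂ (w₁, z₂)) (A₂ u)) := by
  classical
  rcases subsingleton_or_nontrivial H with hH | hH
  · haveI hsub : Subsingleton (H →L[ℂ] H) :=
      ⟨fun a b => ContinuousLinearMap.ext fun x => Subsingleton.elim _ _⟩
    exact ⟨fun z w => ⟨Subsingleton.elim _ _, Subsingleton.elim _ _⟩,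
      fun z₁ w₁ z₂ u => ⟨Subsingleton.elim _ _, Subsingleton.elim _ _⟩⟩
  open MinkSD in
  · -- basic differentiability
    have hd₁ : Differentiable ℂ A₁ := fun z => (h₁ z (Set.mem_univ z)).differentiableAt
    have hd₂ : Differentiable ℂ A₂ := fun z => (h₂ z (Set.mem_univ z)).differentiableAt
    have hfd1 : Differentiable ℂ (fun z => fderiv ℂ A₁ z) :=
      fun z => ((h₁.fderiv) z (Set.mem_univ z)).differentiableAt
    have hfd2 : Differentiable ℂ (fun z => fderiv ℂ A₂ z) :=
      fun z => ((h₂.fderiv) z (Set.mem_univ z)).differentiableAt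
    have hdp2A1 : Differentiable ℂ (pderiv2 A₁) :=
      ((ContinuousLinearMap.apply ℂ (H →L[ℂ] H) (((0 : ℂ), (1 : ℂ)))).differentiable).comp hfd1
    have hdp1A2 : Differentiable ℂ (pderiv1 A₂) :=
      ((ContinuousLinearMap.apply ℂ (H →L[ℂ] H) (((1 : ℂ), (0 : ℂ)))).differentiable).comp hfd2
    -- Step 1 : polarization of normality
    have hP0₂ : ∀ a w, Commute (star (A₂ a)) (A₂ w) := by
      have hall : ∀ p : (ℂ × ℂ) × (ℂ × ℂ),
          star (A₂ (cc p.2)) * A₂ p.1 - A₂ p.1 * star (A₂ (cc p.2)) = 0 := by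
        apply entire4_zero_of_conj_diag
        · exact (((differentiable_dagger hd₂).comp differentiable_snd).mul
            (hd₂.comp differentiable_fst)).sub
            ((hd₂.comp differentiable_fst).mul
              ((differentiable_dagger hd₂).comp differentiable_snd))
        · intro z
          simp only [cc_cc]
          exact sub_eq_zero.mpr (hn₂ z).star_comm_self
      intro a w
      have h := hall (w, cc a)
      simp only [cc_cc] at h
      exact sub_eq_zero.mp h
    have hP0₁ : ∀ a w, Commute (star (A₁ a)) (A₁ w) := by
      have hall : ∀ p : (ℂ × ℂ) × (ℂ × ℂ),
          star (A₁ (cc p.2)) * A₁ p.1 - A₁ p.1 * star (A₁ (cc p.2)) = 0 := by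
        apply entire4_zero_of_conj_diag
        · exact (((differentiable_dagger hd₁).comp differentiable_snd).mul
            (hd₁.comp differentiable_fst)).sub
            ((hd₁.comp differentiable_fst).mul
              ((differentiable_dagger hd₁).comp differentiable_snd))
        · intro z
          simp only [cc_cc]
          exact sub_eq_zero.mpr (hn₁ z).star_comm_self
      intro a w
      have h := hall (w, cc a)
      simp only [cc_cc] at h
      exact sub_eq_zero.mp h
    have hC3 : ∀ z w, Commute (A₂ z) (A₂ w) := by
      intro z w
      have h1 := MinkSD.fuglede (hn₂ w) (hP0₂ z w)
      exact commute_star_star.mp h1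
    have hC4 : ∀ z w, Commute (A₁ z) (A₁ w) := by
      intro z w
      have h1 := MinkSD.fuglede (hn₁ w) (hP0₁ z w)
      exact commute_star_star.mp h1
    -- Step 2 : polarization of the field equation
    have hC2 : ∀ u u' z, Commute (star (A₁ u) - star (A₁ u')) (A₂ z) := by
      have hall : ∀ p : (ℂ × ℂ) × (ℂ × ℂ),
          Complex.I • (pderiv2 A₁ p.1 - pderiv1 A₂ p.1)
            - ((A₁ p.1 - Complex.I • star (A₁ (cc p.2))) * A₂ p.1
              - A₂ p.1 * (A₁ p.1 - Complex.I • star (A₁ (cc p.2)))) = 0 := by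
        apply entire4_zero_of_conj_diag
        · have hstar : Differentiable ℂ
              (fun p : (ℂ × ℂ) × (ℂ × ℂ) => A₁ p.1 - Complex.I • star (A₁ (cc p.2))) :=
            (hd₁.comp differentiable_fst).sub
              (((differentiable_dagger hd₁).comp differentiable_snd).fun_const_smul _)
          exact (((hdp2A1.comp differentiable_fst).sub
            (hdp1A2.comp differentiable_fst)).fun_const_smul Complex.I).sub
            ((hstar.mul (hd₂.comp differentiable_fst)).sub
              ((hd₂.comp differentiable_fst).mul hstar))
        · intro z
          simp only [cc_cc]
          exact sub_eq_zero.mpr (heq z)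
      intro u u' z
      have h1 := hall (z, cc u)
      have h2 := hall (z, cc u')
      simp only [cc_cc] at h1 h2
      have h1' : Complex.I • (pderiv2 A₁ z - pderiv1 A₂ z)
          = (A₁ z - Complex.I • star (A₁ u)) * A₂ z
            - A₂ z * (A₁ z - Complex.I • star (A₁ u)) := sub_eq_zero.mp h1
      have h2' : Complex.I • (pderiv2 A₁ z - pderiv1 A₂ z)
          = (A₁ z - Complex.I • star (A₁ u')) * A₂ z
            - A₂ z * (A₁ z - Complex.I • star (A₁ u')) := sub_eq_zero.mp h2
      have h3 := MinkSD.sub_comm_aux h1' h2'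
      have h4 : Commute (Complex.I • (star (A₁ u) - star (A₁ u'))) (A₂ z) := by
        rw [smul_sub]
        exact h3
      exact (Commute.smul_left_iff₀ Complex.I_ne_zero).mp h4
    have hC1 : ∀ u u' z, Commute (A₁ u - A₁ u') (A₂ z) := by
      intro u u' z
      have h1 := MinkSD.fuglede (hn₂ z) (hC2 u u' z)
      rw [← star_sub] at h1
      exact commute_star_star.mp h1
    -- derivative commutation facts
    have hD1 : ∀ z v w, Commute (fderiv ℂ A₁ z v) (A₂ w) := by
      intro z v w
      have h := commute_fderiv (f := fun u => A₁ u - A₁ 0) (hd₁.sub_const _)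
        (fun u => hC1 u 0 w) z v
      rwa [fderiv_sub_const] at h
    have hD1' : ∀ z v w, Commute (star (fderiv ℂ A₁ z v)) (A₂ w) := by
      intro z v w
      have h := commute_star_fderiv (f := fun u => A₁ u - A₁ 0) (hd₁.sub_const _)
        (fun u => by rw [star_sub]; exact hC2 u 0 w) z v
      rwa [fderiv_sub_const] at h
    have hD2 : ∀ z v w, Commute (fderiv ℂ A₂ z v) (A₂ w) :=
      fun z v w => commute_fderiv hd₂ (fun u => hC3 u w) z v
    have hD2' : ∀ z v w, Commute (star (fderiv ℂ A₂ z v)) (A₂ w) :=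
      fun z v w => commute_star_fderiv hd₂ (fun u => hP0₂ u w) z v
    have hD3 : ∀ z v w, Commute (fderiv ℂ A₁ z v) (A₁ w) :=
      fun z v w => commute_fderiv hd₁ (fun u => hC4 u w) z v
    have hD3' : ∀ z v w, Commute (star (fderiv ℂ A₁ z v)) (A₁ w) :=
      fun z v w => commute_star_fderiv hd₁ (fun u => hP0₁ u w) z v
    -- second level
    have hE1 : ∀ z w v, Commute (star (pderiv2 A₁ z)) (fderiv ℂ A₂ w v) :=
      fun z w v => (commute_fderiv hd₂ (fun u => (hD1' z (0, 1) u).symm) w v).symm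
    have hE2 : ∀ z w v, Commute (star (pderiv2 A₁ z)) (fderiv ℂ A₁ w v) :=
      fun z w v => (commute_fderiv hd₁ (fun u => (hD3' z (0, 1) u).symm) w v).symm
    have hE3 : ∀ z w v, Commute (star (pderiv1 A₂ z)) (fderiv ℂ A₂ w v) :=
      fun z w v => (commute_fderiv hd₂ (fun u => (hD2' z (1, 0) u).symm) w v).symm
    have hE4 : ∀ z w, Commute (star (pderiv1 A₂ z)) (pderiv2 A₁ w) := by
      intro z w
      have h := hE1 w z (1, 0)
      have h5 := commute_star_star.mpr h
      rw [star_star] at h5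
      exact h5.symm
    -- K is normal and commutes with A₂
    have hN1 : ∀ z, IsStarNormal (pderiv1 A₂ z - pderiv2 A₁ z) := by
      intro z
      constructor
      rw [star_sub]
      exact ((hE3 z z (1, 0)).sub_right (hE4 z z)).sub_left
        ((hE1 z z (1, 0)).sub_right (hE2 z z (0, 1)))
    have hN2 : ∀ z, Commute (pderiv1 A₂ z - pderiv2 A₁ z) (A₂ z) :=
      fun z => (hD2 z (1, 0) z).sub_left (hD1 z (0, 1) z)
    -- the representation of K as a commutator
    have hKrep : ∀ z, pderiv1 A₂ z - pderiv2 A₁ z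
        = (Complex.I • A₁ z + star (A₁ z)) * A₂ z
          - A₂ z * (Complex.I • A₁ z + star (A₁ z)) := by
      intro z
      calc pderiv1 A₂ z - pderiv2 A₁ z
          = Complex.I • (Complex.I • (pderiv2 A₁ z - pderiv1 A₂ z)) := by
            rw [smul_smul, Complex.I_mul_I, neg_smul, one_smul, neg_sub]
        _ = Complex.I • ((A₁ z - Complex.I • star (A₁ z)) * A₂ z
            - A₂ z * (A₁ z - Complex.I • star (A₁ z))) := by rw [heq z]
        _ = (Complex.I • A₁ z + star (A₁ z)) * A₂ z
            - A₂ z * (Complex.I • A₁ z + star (A₁ z)) := by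
            rw [smul_sub, ← smul_mul_assoc, ← mul_smul_comm, smul_sub, smul_smul,
              Complex.I_mul_I, neg_smul, one_smul, sub_neg_eq_add]
    -- Kleinecke–Shirokov : K = 0
    have hKzero : ∀ z, pderiv1 A₂ z = pderiv2 A₁ z := by
      intro z
      set Pz := Complex.I • A₁ z + star (A₁ z) with hPzdef
      have hb : A₂ z * Pz - Pz * A₂ z = -(pderiv1 A₂ z - pderiv2 A₁ z) := by
        rw [hKrep z]
        rw [neg_sub]
      have hnormal : IsStarNormal (A₂ z * Pz - Pz * A₂ z) := by
        rw [hb]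
        constructor
        rw [star_neg]
        exact (hN1 z).star_comm_self.neg_left.neg_right
      have hcomm : Commute (A₂ z * Pz - Pz * A₂ z) (A₂ z) := by
        rw [hb]
        exact (hN2 z).neg_left
      have h0 := MinkSD.kleinecke_shirokov hnormal hcomm
      rw [hb] at h0
      have h1 := neg_eq_zero.mp h0
      exact sub_eq_zero.mp h1
    -- conclusion
    refine ⟨fun z w => ⟨hC1 z w w, hC2 z w w⟩, fun z₁ w₁ z₂ u => ⟨?_, ?_⟩⟩
    · -- commutes with A₁ u
      have hslice : ∀ t : ℂ,
          HasDerivAt (fun t : ℂ => A₂ (t, z₂) * A₁ u - A₁ u * A₂ (t, z₂)) 0 t := by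
        intro t
        have hι : HasDerivAt (fun t : ℂ => ((t, z₂) : ℂ × ℂ)) ((1 : ℂ), (0 : ℂ)) t :=
          (hasDerivAt_id t).prodMk (hasDerivAt_const t z₂)
        have hA2t : HasDerivAt (fun t : ℂ => A₂ (t, z₂)) (pderiv1 A₂ (t, z₂)) t :=
          (hd₂ (t, z₂)).hasFDerivAt.comp_hasDerivAt t hι
        have h1 : HasDerivAt (fun t : ℂ => A₂ (t, z₂) * A₁ u - A₁ u * A₂ (t, z₂))
            (pderiv1 A₂ (t, z₂) * A₁ u - A₁ u * pderiv1 A₂ (t, z₂)) t :=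
          (hA2t.mul_const _).sub (hA2t.const_mul _)
        have h0 : pderiv1 A₂ (t, z₂) * A₁ u - A₁ u * pderiv1 A₂ (t, z₂) = 0 := by
          rw [hKzero (t, z₂)]
          exact sub_eq_zero.mpr (hD3 (t, z₂) (0, 1) u)
        rwa [h0] at h1
      have hgconst := is_const_of_deriv_eq_zero
        (f := fun t : ℂ => A₂ (t, z₂) * A₁ u - A₁ u * A₂ (t, z₂))
        (fun t => (hslice t).differentiableAt) (fun t => (hslice t).deriv) z₁ w₁
      have hkey : (A₂ (z₁, z₂) - A₂ (w₁, z₂)) * A₁ u - A₁ u * (A₂ (z₁, z₂) - A₂ (w₁, z₂))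
          = (A₂ (z₁, z₂) * A₁ u - A₁ u * A₂ (z₁, z₂))
            - (A₂ (w₁, z₂) * A₁ u - A₁ u * A₂ (w₁, z₂)) := by
        noncomm_ring
      rw [hgconst, sub_self] at hkey
      exact sub_eq_zero.mp hkey
    · exact (hC3 _ u).sub_left (hC3 _ u)
end

section
/- Let h : ℂ² → ℂ and H : ℂ² → ℂ be holomorphic with ∂₁H = ∂₂h. Let U = (1/√2)·[[1, 1], [i, −i]], A₁(z) = [[h(z), 0], [0, h(z) + 1 − i]], and A₂(z) = U* · [[H(z) + cos z₂, 0], [0, H(z) + i·sin z₂]] · U. Then: (i) A₁(z) and A₂(z) are normal for every z; (ii) [A₁(z)* − i·A₁(z), A₂(z)] = 0 for every z; (iii) ∂₁A₂(z) = ∂₂A₁(z) for every z (so the self-duality condition [A₁* − iA₁, A₂] = i(∂₁A₂ − ∂₂A₁) holds); and (iv) [A₂(z), A₁(z)*] = (1/√2)·e^{−i(z₂ − π/4)}·[[0, 1], [−1, 0]], which is nonzero for every z ∈ ℂ². -/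
attribute [local instance] Matrix.normedAddCommGroup Matrix.normedSpace

/-- The unitary matrix `U = (1/√2)·[[1, 1], [i, −i]]`. -/
noncomputable def Umat : Matrix (Fin 2) (Fin 2) ℂ :=
  ((1 : ℂ) / (Real.sqrt 2 : ℂ)) • !![1, 1; Complex.I, -Complex.I]

/-- `A₁(z) = [[h(z), 0], [0, h(z) + 1 − i]]`. -/
noncomputable def Amat1 (h : ℂ × ℂ → ℂ) (z : ℂ × ℂ) : Matrix (Fin 2) (Fin 2) ℂ :=
  !![h z, 0; 0, h z + 1 - Complex.I]

/-- `A₂(z) = U* · [[H(z) + cos z₂, 0], [0, H(z) + i·sin z₂]] · U`. -/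
noncomputable def Amat2 (Hf : ℂ × ℂ → ℂ) (z : ℂ × ℂ) : Matrix (Fin 2) (Fin 2) ℂ :=
  star Umat * !![Hf z + Complex.cos z.2, 0; 0, Hf z + Complex.I * Complex.sin z.2] *
    Umat

lemma sqrt2_mul : ((Real.sqrt 2 : ℝ) : ℂ) * (Real.sqrt 2 : ℂ) = 2 := by
  norm_cast
  exact Real.mul_self_sqrt (by norm_num)

lemma sqrt2_ne : ((Real.sqrt 2 : ℝ) : ℂ) ≠ 0 := by
  intro h
  have h2 := sqrt2_mul
  rw [h, mul_zero] at h2; norm_num at h2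

lemma Amat2_eq (Hf : ℂ × ℂ → ℂ) (z : ℂ × ℂ) :
    Amat2 Hf z = !![Hf z + (Complex.cos z.2 + Complex.I * Complex.sin z.2)/2,
                    (Complex.cos z.2 - Complex.I * Complex.sin z.2)/2;
                    (Complex.cos z.2 - Complex.I * Complex.sin z.2)/2,
                    Hf z + (Complex.cos z.2 + Complex.I * Complex.sin z.2)/2] := by
  have h2 := sqrt2_mul
  have hne := sqrt2_ne
  unfold Amat2 Umat
  ext i j
  fin_cases i <;> fin_cases j <;>
    simp [Matrix.mul_apply, Fin.sum_univ_two, Matrix.star_apply] <;>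
    field_simp <;> ring_nf <;>
      simp only [show ((Real.sqrt 2 : ℝ) : ℂ)^2 = 2 by rw [sq]; exact h2,
        show Complex.I^2 = -1 from Complex.I_sq,
        show Complex.I^3 = -Complex.I by rw [pow_succ, Complex.I_sq]; ring] <;> ring

lemma Amat2_decomp (Hf : ℂ × ℂ → ℂ) :
    Amat2 Hf = fun z => Hf z • (1 : Matrix (Fin 2) (Fin 2) ℂ) +
      Complex.cos z.2 • !![(1:ℂ)/2, 1/2; 1/2, 1/2] +
      Complex.sin z.2 • !![Complex.I/2, -(Complex.I/2); -(Complex.I/2), Complex.I/2] := by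
  funext z
  rw [Amat2_eq]
  ext i j
  fin_cases i <;> fin_cases j <;>
    simp [Matrix.one_apply] <;> ring

lemma Amat1_decomp (h : ℂ × ℂ → ℂ) :
    Amat1 h = fun z => h z • (1 : Matrix (Fin 2) (Fin 2) ℂ) +
      !![(0:ℂ), 0; 0, 1 - Complex.I] := by
  funext z
  ext i j
  fin_cases i <;> fin_cases j <;> simp [Amat1, Matrix.one_apply] <;> ring

lemma key_scalar (w : ℂ) :
    ((1 : ℂ) / (Real.sqrt 2 : ℂ)) *
      Complex.exp (-Complex.I * (w - (Real.pi : ℂ) / 4)) =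
    (Complex.cos w - Complex.I * Complex.sin w) * (1 + Complex.I) / 2 := by
  have h2 := sqrt2_mul
  have hne := sqrt2_ne
  rw [show -Complex.I * (w - (Real.pi : ℂ)/4)
      = (-w)*Complex.I + ((Real.pi/4 : ℝ) : ℂ)*Complex.I by push_cast; ring,
    Complex.exp_add, Complex.exp_mul_I, Complex.exp_mul_I,
    Complex.cos_neg, Complex.sin_neg,
    ← Complex.ofReal_cos, ← Complex.ofReal_sin,
    Real.cos_pi_div_four, Real.sin_pi_div_four]
  push_cast
  field_simp
  ring_nf

lemma star_Amat1 (h : ℂ × ℂ → ℂ) (z : ℂ × ℂ) :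
    star (Amat1 h z) =
      !![(starRingEnd ℂ) (h z), 0; 0, (starRingEnd ℂ) (h z) + 1 + Complex.I] := by
  ext i j
  fin_cases i <;> fin_cases j <;>
    simp [Amat1, Matrix.star_eq_conjTranspose, Matrix.conjTranspose_apply,
      Complex.conj_I] <;> ring

/-- the explicit nontrivial pluriharmonic SD example (Example 6.3). -/
theorem explicit_minkowski_sd_example
    (h Hf : ℂ × ℂ → ℂ)
    (hh : AnalyticOnNhd ℂ h Set.univ) (hH : AnalyticOnNhd ℂ Hf Set.univ)
    (hHd : ∀ z, pderiv1 Hf z = pderiv2 h z) :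
    (∀ z, IsStarNormal (Amat1 h z)) ∧
    (∀ z, IsStarNormal (Amat2 Hf z)) ∧
    (∀ z, (star (Amat1 h z) - Complex.I • Amat1 h z) * Amat2 Hf z -
      Amat2 Hf z * (star (Amat1 h z) - Complex.I • Amat1 h z) = 0) ∧
    (∀ z, pderiv1 (Amat2 Hf) z = pderiv2 (Amat1 h) z) ∧
    (∀ z : ℂ × ℂ,
      Amat2 Hf z * star (Amat1 h z) - star (Amat1 h z) * Amat2 Hf z =
        ((1 : ℂ) / (Real.sqrt 2 : ℂ)) •
          Complex.exp (-Complex.I * (z.2 - (Real.pi : ℂ) / 4)) • !![0, 1; -1, 0] ∧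
      Amat2 Hf z * star (Amat1 h z) - star (Amat1 h z) * Amat2 Hf z ≠ 0) := by
  -- commutator formula used in part (iv)
  have hcomm : ∀ z : ℂ × ℂ,
      Amat2 Hf z * star (Amat1 h z) - star (Amat1 h z) * Amat2 Hf z =
        ((Complex.cos z.2 - Complex.I * Complex.sin z.2) * (1 + Complex.I) / 2) •
          !![(0:ℂ), 1; -1, 0] := by
    intro z
    rw [Amat2_eq, star_Amat1]
    ext i j
    fin_cases i <;> fin_cases j <;>
      simp [Matrix.mul_apply, Fin.sum_univ_two] <;> ring
  refine ⟨?_, ?_, ?_, ?_, ?_⟩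
  · intro z
    refine ⟨?_⟩
    show star (Amat1 h z) * Amat1 h z = Amat1 h z * star (Amat1 h z)
    ext i j
    fin_cases i <;> fin_cases j <;>
      simp [Amat1, Matrix.mul_apply, Fin.sum_univ_two,
        Matrix.star_eq_conjTranspose, Matrix.conjTranspose_apply] <;> ring
  · intro z
    refine ⟨?_⟩
    show star (Amat2 Hf z) * Amat2 Hf z = Amat2 Hf z * star (Amat2 Hf z)
    rw [Amat2_eq]
    ext i j
    fin_cases i <;> fin_cases j <;>
      simp [Matrix.mul_apply, Fin.sum_univ_two,
        Matrix.star_eq_conjTranspose, Matrix.conjTranspose_apply] <;> ring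
  · intro z
    rw [Amat2_eq, star_Amat1]
    ext i j
    fin_cases i <;> fin_cases j <;>
      simp [Amat1, Matrix.mul_apply, Fin.sum_univ_two, Matrix.smul_apply] <;> ring_nf <;>
      simp only [show Complex.I^2 = -1 from Complex.I_sq,
        show Complex.I^3 = -Complex.I by rw [pow_succ, Complex.I_sq]; ring] <;> ring
  · intro z
    have hHf : HasFDerivAt Hf (fderiv ℂ Hf z) z :=
      ((hH z trivial).differentiableAt).hasFDerivAt
    have hhf : HasFDerivAt h (fderiv ℂ h z) z :=
      ((hh z trivial).differentiableAt).hasFDerivAt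
    have hcos : HasFDerivAt (fun w : ℂ × ℂ => Complex.cos w.2)
        ((-Complex.sin z.2) • ContinuousLinearMap.snd ℂ ℂ ℂ) z :=
      (Complex.hasDerivAt_cos z.2).comp_hasFDerivAt z (hasFDerivAt_snd)
    have hsin : HasFDerivAt (fun w : ℂ × ℂ => Complex.sin w.2)
        ((Complex.cos z.2) • ContinuousLinearMap.snd ℂ ℂ ℂ) z :=
      (Complex.hasDerivAt_sin z.2).comp_hasFDerivAt z (hasFDerivAt_snd)
    have hA2 : HasFDerivAt (Amat2 Hf)
        ((((fderiv ℂ Hf z).smulRight (1 : Matrix (Fin 2) (Fin 2) ℂ)) +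
          (((-Complex.sin z.2) • ContinuousLinearMap.snd ℂ ℂ ℂ).smulRight
            !![(1:ℂ)/2, 1/2; 1/2, 1/2])) +
          (((Complex.cos z.2) • ContinuousLinearMap.snd ℂ ℂ ℂ).smulRight
            !![Complex.I/2, -(Complex.I/2); -(Complex.I/2), Complex.I/2])) z := by
      rw [Amat2_decomp]
      exact ((hHf.smul_const _).add (hcos.smul_const _)).add (hsin.smul_const _)
    have hA1 : HasFDerivAt (Amat1 h)
        ((fderiv ℂ h z).smulRight (1 : Matrix (Fin 2) (Fin 2) ℂ)) z := by
      rw [Amat1_decomp]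
      exact (hhf.smul_const _).add_const _
    have e2 : pderiv1 (Amat2 Hf) z = (pderiv1 Hf z) • (1 : Matrix (Fin 2) (Fin 2) ℂ) := by
      rw [pderiv1]; erw [hA2.fderiv]
      change fderiv ℂ Hf z (1, 0) • (1 : Matrix (Fin 2) (Fin 2) ℂ) +
          ((-Complex.sin z.2) • ((1, 0) : ℂ × ℂ).2) • !![(1:ℂ)/2, 1/2; 1/2, 1/2] +
          ((Complex.cos z.2) • ((1, 0) : ℂ × ℂ).2) •
            !![Complex.I/2, -(Complex.I/2); -(Complex.I/2), Complex.I/2] = _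
      simp [pderiv1]
    have e1 : pderiv2 (Amat1 h) z = (pderiv2 h z) • (1 : Matrix (Fin 2) (Fin 2) ℂ) := by
      rw [pderiv2]; erw [hA1.fderiv]
      rfl
    rw [e1, e2, hHd]
  · intro z
    constructor
    · rw [hcomm z, smul_smul, ← key_scalar z.2]
    · rw [hcomm z]
      intro h0
      have h01 := congrFun (congrFun h0 0) 1
      simp [Matrix.smul_apply] at h01
      rcases h01 with h01 | h01
      · exact (Complex.exp_ne_zero (-Complex.I * z.2)) (by
          rw [show -Complex.I * z.2 = (-z.2) * Complex.I by ring, Complex.exp_mul_I,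
            Complex.cos_neg, Complex.sin_neg]
          linear_combination h01)
      · have : (1 + Complex.I) ≠ 0 := by
          intro hx
          have := congrArg Complex.im hx
          simp at this
        exact this h01
end

section
/- Let 𝒜 be a C*-algebra and let A₁, A₂ : ℂ² → 𝒜 be holomorphic with A₁(z), A₂(z) normal for every z. Suppose that either [A₁(z)* − i·A₁(z), A₂(z)] = i(∂₁A₂(z) − ∂₂A₁(z)) for all z (the self-dual case under the Minkowski metric), or [A₁(z)* + i·A₁(z), A₂(z)] = −i(∂₁A₂(z) − ∂₂A₁(z)) for all z (the anti-self-dual case). Then [(∂ⱼA₁(z))*, A₂(z)] = 0 for j = 1, 2 and all z ∈ ℂ². -/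
open Complex in
private lemma comm_key {𝒜 : Type*} [NormedRing 𝒜] [StarRing 𝒜] [CStarRing 𝒜]
    [NormedAlgebra ℂ 𝒜] [CompleteSpace 𝒜] [StarModule ℂ 𝒜]
    (A₁ A₂ : ℂ × ℂ → 𝒜)
    (h₁ : AnalyticOnNhd ℂ A₁ Set.univ) (h₂ : AnalyticOnNhd ℂ A₂ Set.univ)
    (z : ℂ × ℂ)
    (hF : DifferentiableAt ℂ (fun w => star (A₁ w) * A₂ w - A₂ w * star (A₁ w)) z)
    (v : ℂ × ℂ) :
    star (fderiv ℂ A₁ z v) * A₂ z = A₂ z * star (fderiv ℂ A₁ z v) := by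
  set L₁ := fderiv ℂ A₁ z with hL₁
  set L₂ := fderiv ℂ A₂ z with hL₂
  have d₁ : HasFDerivAt A₁ L₁ z := ((h₁ z trivial).differentiableAt).hasFDerivAt
  have d₂ : HasFDerivAt A₂ L₂ z := ((h₂ z trivial).differentiableAt).hasFDerivAt
  have hR₁ : HasFDerivAt A₁ (L₁.restrictScalars ℝ) z := d₁.restrictScalars ℝ
  have hR₂ : HasFDerivAt A₂ (L₂.restrictScalars ℝ) z := d₂.restrictScalars ℝ
  set S : 𝒜 →L[ℝ] 𝒜 := ((starL' ℝ : 𝒜 ≃L[ℝ] 𝒜) : 𝒜 →L[ℝ] 𝒜) with hS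
  have hs : HasFDerivAt (fun w => star (A₁ w)) (S.comp (L₁.restrictScalars ℝ)) z :=
    (S.hasFDerivAt).comp z hR₁
  set M : (ℂ × ℂ) →L[ℝ] 𝒜 :=
    (star (A₁ z) • (L₂.restrictScalars ℝ) + (S.comp (L₁.restrictScalars ℝ)).smulRight (A₂ z)) -
      (A₂ z • (S.comp (L₁.restrictScalars ℝ)) + (L₂.restrictScalars ℝ).smulRight (star (A₁ z))) with hM
  have hFd : HasFDerivAt (fun w => star (A₁ w) * A₂ w - A₂ w * star (A₁ w)) M z :=
    (hs.mul' hR₂).sub (hR₂.mul' hs)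
  have hCd : HasFDerivAt (fun w => star (A₁ w) * A₂ w - A₂ w * star (A₁ w))
      ((fderiv ℂ (fun w => star (A₁ w) * A₂ w - A₂ w * star (A₁ w)) z).restrictScalars ℝ) z :=
    (hF.hasFDerivAt).restrictScalars ℝ
  have hMeq := hFd.unique hCd
  have key : M (Complex.I • v) = Complex.I • M v := by
    rw [hMeq]
    exact (fderiv ℂ _ z).map_smul Complex.I v
  have hLs : L₁ (Complex.I • v) = Complex.I • L₁ v := L₁.map_smul _ _
  have hLs2 : L₂ (Complex.I • v) = Complex.I • L₂ v := L₂.map_smul _ _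
  simp only [hM, ContinuousLinearMap.sub_apply, ContinuousLinearMap.add_apply,
    ContinuousLinearMap.smul_apply, ContinuousLinearMap.smulRight_apply,
    ContinuousLinearMap.comp_apply, ContinuousLinearMap.coe_restrictScalars',
    hLs, hLs2, hS, ContinuousLinearEquiv.coe_coe, starL'_apply] at key
  rw [star_smul, Complex.star_def, Complex.conj_I] at key
  simp only [smul_eq_mul, smul_mul_assoc, mul_smul_comm, neg_smul, neg_mul, mul_neg,
    smul_sub, smul_add] at key
  have h2 : (2*Complex.I) • (star (L₁ v) * A₂ z) = (2*Complex.I) • (A₂ z * star (L₁ v)) := by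
    linear_combination (norm := module) -key
  exact smul_right_injective 𝒜 (by simp [Complex.ext_iff] : (2*Complex.I : ℂ) ≠ 0) h2

/-- if `A₁, A₂ : ℂ² → 𝒜` are holomorphic with normal values and the
curvature form `F_A` is SD or ASD under the Minkowski metric, then
`[(∂ⱼA₁(z))*, A₂(z)] = 0` for `j = 1, 2` and all `z`. -/
theorem adjoint_derivatives_commute
    {𝒜 : Type*} [NormedRing 𝒜] [StarRing 𝒜] [CStarRing 𝒜]
    [NormedAlgebra ℂ 𝒜] [CompleteSpace 𝒜] [StarModule ℂ 𝒜]
    (A₁ A₂ : ℂ × ℂ → 𝒜)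
    (h₁ : AnalyticOnNhd ℂ A₁ Set.univ) (h₂ : AnalyticOnNhd ℂ A₂ Set.univ)
    (hn₁ : ∀ z, IsStarNormal (A₁ z)) (hn₂ : ∀ z, IsStarNormal (A₂ z))
    (hsd : (∀ z, (star (A₁ z) - Complex.I • A₁ z) * A₂ z -
          A₂ z * (star (A₁ z) - Complex.I • A₁ z) =
        Complex.I • (pderiv1 A₂ z - pderiv2 A₁ z)) ∨
      (∀ z, (star (A₁ z) + Complex.I • A₁ z) * A₂ z -
          A₂ z * (star (A₁ z) + Complex.I • A₁ z) =
        -(Complex.I • (pderiv1 A₂ z - pderiv2 A₁ z)))) :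
    ∀ z : ℂ × ℂ,
      star (pderiv1 A₁ z) * A₂ z = A₂ z * star (pderiv1 A₁ z) ∧
      star (pderiv2 A₁ z) * A₂ z = A₂ z * star (pderiv2 A₁ z) := by
  have hA₁ : Differentiable ℂ A₁ := fun w => (h₁ w trivial).differentiableAt
  have hA₂ : Differentiable ℂ A₂ := fun w => (h₂ w trivial).differentiableAt
  have hp2 : Differentiable ℂ (fun w => pderiv1 A₂ w) := fun w =>
    ((h₂.fderiv w trivial).differentiableAt).clm_apply (differentiableAt_const _)
  have hp1 : Differentiable ℂ (fun w => pderiv2 A₁ w) := fun w =>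
    ((h₁.fderiv w trivial).differentiableAt).clm_apply (differentiableAt_const _)
  have hFdiff : ∀ w, DifferentiableAt ℂ
      (fun w => star (A₁ w) * A₂ w - A₂ w * star (A₁ w)) w := by
    rcases hsd with hsd | hsd
    · have hfun : (fun w => star (A₁ w) * A₂ w - A₂ w * star (A₁ w)) =
          fun w => Complex.I • (pderiv1 A₂ w - pderiv2 A₁ w) +
            Complex.I • (A₁ w * A₂ w - A₂ w * A₁ w) := by
        funext w
        have := hsd w
        rw [sub_mul, mul_sub] at this
        simp only [smul_mul_assoc, mul_smul_comm] at this
        linear_combination (norm := module) this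
      rw [hfun]
      intro w
      exact ((((hp2 w).sub (hp1 w)).const_smul Complex.I).add
        ((((hA₁ w).mul (hA₂ w)).sub ((hA₂ w).mul (hA₁ w))).const_smul Complex.I))
    · have hfun : (fun w => star (A₁ w) * A₂ w - A₂ w * star (A₁ w)) =
          fun w => -(Complex.I • (pderiv1 A₂ w - pderiv2 A₁ w)) -
            Complex.I • (A₁ w * A₂ w - A₂ w * A₁ w) := by
        funext w
        have := hsd w
        rw [add_mul, mul_add] at this
        simp only [smul_mul_assoc, mul_smul_comm] at this
        linear_combination (norm := module) this
      rw [hfun]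
      intro w
      exact ((((hp2 w).sub (hp1 w)).const_smul Complex.I).neg.sub
        ((((hA₁ w).mul (hA₂ w)).sub ((hA₂ w).mul (hA₁ w))).const_smul Complex.I))
  intro z
  exact ⟨comm_key A₁ A₂ h₁ h₂ z (hFdiff z) (1, 0),
    comm_key A₁ A₂ h₁ h₂ z (hFdiff z) (0, 1)⟩
end
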